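/- Let D be a self-adjoint operator on H and a ∈ B(H) twice weakly D-differentiable (a is weakly D-differentiable and wD(a) is weakly D-differentiable). Then a is strongly D-differentiable, i.e., lim_{t→0} (e^{itD} a e^{-itD} − a)/(it) exists in operator norm and equals wD(a). -/

import Mathlib

open Complex Filter Topology MeasureTheory
open scoped Topology

local notation "⟪" x ", " y "⟫" => @inner ℂ _ _ x y

variable {H : Type*} [NormedAddCommGroup H] [InnerProductSpace ℂ H] [CompleteSpace H]

/-- `b` is the bounded operator implementing the commutator form
`(ξ, η) ↦ ⟨aξ, Dη⟩ − ⟨aDξ, η⟩` on `dom D × dom D`; i.e. `a` is weakly `D`-differentiable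
with derivative `wD(a) = b`. -/
def IsWeakDeriv (D : H →ₗ.[ℂ] H) (a b : H →L[ℂ] H) : Prop :=
  ∀ ξ η : D.domain, ⟪b (ξ : H), (η : H)⟫ = ⟪a (ξ : H), D η⟫ - ⟪a (D ξ), (η : H)⟫

/-- `conjAd U t a = U t ∘ a ∘ U (−t)`, i.e. `α_t(a) = e^{itD} a e^{-itD}`. -/
noncomputable def conjAd (U : ℝ → H →L[ℂ] H) (t : ℝ) (a : H →L[ℂ] H) : H →L[ℂ] H :=
  (U t).comp (a.comp (U (-t)))

/-- `U` is the strongly continuous one-parameter unitary group `t ↦ e^{itD}`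
generated by the self-adjoint operator `D` (Stone's theorem characterization). -/
structure IsStoneGroupOf (D : H →ₗ.[ℂ] H) (U : ℝ → H →L[ℂ] H) : Prop where
  map_zero : U 0 = 1
  map_add : ∀ s t : ℝ, U (s + t) = (U s).comp (U t)
  isometry : ∀ (t : ℝ) (ξ : H), ‖U t ξ‖ = ‖ξ‖
  hasDerivAt : ∀ ξ : D.domain, HasDerivAt (fun t : ℝ => U t (ξ : H)) (Complex.I • D ξ) 0
  mem_domain : ∀ ξ v : H, HasDerivAt (fun t : ℝ => U t ξ) v 0 → ξ ∈ D.domain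

set_option linter.unusedSectionVars false

variable {D : H →ₗ.[ℂ] H} {U : ℝ → H →L[ℂ] H}

lemma stone_inv (hU : IsStoneGroupOf D U) (t : ℝ) (ξ : H) : U t (U (-t) ξ) = ξ := by
  have h := hU.map_add t (-t)
  rw [add_neg_cancel, hU.map_zero] at h
  have := congrArg (fun L : H →L[ℂ] H => L ξ) h
  simpa using this.symm

lemma stone_inner (hU : IsStoneGroupOf D U) (t : ℝ) (ξ η : H) :
    ⟪U t ξ, η⟫ = ⟪ξ, U (-t) η⟫ := by
  have li : H →ₗᵢ[ℂ] H := ⟨(U t).toLinearMap, hU.isometry t⟩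
  calc ⟪U t ξ, η⟫ = ⟪U t ξ, U t (U (-t) η)⟫ := by rw [stone_inv hU]
    _ = ⟪ξ, U (-t) η⟫ := LinearIsometry.inner_map_map ⟨(U t).toLinearMap, hU.isometry t⟩ ξ _

lemma stone_orbit (hU : IsStoneGroupOf D U) (ξ : D.domain) (t : ℝ) :
    ∃ h : U t (ξ : H) ∈ D.domain, D ⟨U t (ξ : H), h⟩ = U t (D ξ) ∧
      HasDerivAt (fun s : ℝ => U s (ξ : H)) (Complex.I • U t (D ξ)) t := by
  have h1 : (fun s : ℝ => U s (U t (ξ : H))) = fun s => U t (U s (ξ : H)) := by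
    funext s
    have e1 := congrArg (fun L : H →L[ℂ] H => L (ξ : H)) (hU.map_add s t)
    have e2 := congrArg (fun L : H →L[ℂ] H => L (ξ : H)) (hU.map_add t s)
    simp only [ContinuousLinearMap.comp_apply] at e1 e2
    rw [← e1, ← e2, add_comm]
  have hd0' : HasDerivAt (fun s : ℝ => U s (U t (ξ : H))) (Complex.I • U t (D ξ)) 0 := by
    rw [h1]
    have := ((U t).restrictScalars ℝ).hasFDerivAt.comp_hasDerivAt 0 (hU.hasDerivAt ξ)
    simpa [Function.comp_def] using this
  have hmem := hU.mem_domain _ _ hd0'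
  have hd1 := hU.hasDerivAt ⟨U t (ξ : H), hmem⟩
  have heq : Complex.I • D ⟨U t (ξ : H), hmem⟩ = Complex.I • U t (D ξ) := hd1.unique hd0'
  have hDval : D ⟨U t (ξ : H), hmem⟩ = U t (D ξ) :=
    smul_right_injective H Complex.I_ne_zero heq
  refine ⟨hmem, hDval, ?_⟩
  have h2 : (fun s : ℝ => U s (ξ : H)) = (fun s : ℝ => U s (U t (ξ : H))) ∘ (fun s => s - t) := by
    funext s
    have e := congrArg (fun L : H →L[ℂ] H => L (ξ : H)) (hU.map_add (s - t) t)
    simp only [ContinuousLinearMap.comp_apply, sub_add_cancel] at e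
    simpa using e
  have hι : HasDerivAt (fun s : ℝ => s - t) 1 t := (hasDerivAt_id t).sub_const t
  have := HasDerivAt.scomp (g₁ := fun s : ℝ => U s (U t (ξ : H))) t (by simpa using hd0') hι
  rw [← h2] at this
  simpa using this

lemma weak_hasDerivAt (hU : IsStoneGroupOf D U) {x y : H →L[ℂ] H} (hw : IsWeakDeriv D x y)
    (ξ η : D.domain) (t : ℝ) :
    HasDerivAt (fun s : ℝ => ⟪x (U (-s) (ξ : H)), U (-s) (η : H)⟫)
      (-Complex.I * ⟪y (U (-t) (ξ : H)), U (-t) (η : H)⟫) t := by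
  obtain ⟨hmξ, hDξ, hdξ⟩ := stone_orbit hU ξ (-t)
  obtain ⟨hmη, hDη, hdη⟩ := stone_orbit hU η (-t)
  have hneg : HasDerivAt (fun s : ℝ => -s) (-1 : ℝ) t := hasDerivAt_neg t
  have hgξ : HasDerivAt (fun s : ℝ => U (-s) (ξ : H))
      ((-1 : ℝ) • (Complex.I • U (-t) (D ξ))) t :=
    HasDerivAt.scomp t hdξ hneg
  have hgη : HasDerivAt (fun s : ℝ => U (-s) (η : H))
      ((-1 : ℝ) • (Complex.I • U (-t) (D η))) t :=
    HasDerivAt.scomp t hdη hneg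
  have hpx : HasDerivAt (fun s : ℝ => x (U (-s) (ξ : H)))
      (x ((-1 : ℝ) • (Complex.I • U (-t) (D ξ)))) t := by
    have := (x.restrictScalars ℝ).hasFDerivAt.comp_hasDerivAt t hgξ
    simpa [Function.comp_def] using this
  have hmain := HasDerivAt.inner ℂ hpx hgη
  convert hmain using 1
  on_goal 1 => rfl
  have hform := hw ⟨U (-t) (ξ : H), hmξ⟩ ⟨U (-t) (η : H), hmη⟩
  simp only [hDξ, hDη] at hform
  simp only [neg_smul, one_smul, map_neg, _root_.map_smul, inner_neg_left, inner_neg_right,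
    inner_smul_left, inner_smul_right, Complex.conj_I] at hform ⊢
  rw [hform]
  ring

lemma bdiff_bound (hU : IsStoneGroupOf D U) {b c : H →L[ℂ] H} (hw2 : IsWeakDeriv D b c)
    (ξ η : D.domain) (s : ℝ) :
    ‖⟪b (U (-s) (ξ : H)), U (-s) (η : H)⟫ - ⟪b (ξ : H), (η : H)⟫‖ ≤
      ‖c‖ * ‖(ξ : H)‖ * ‖(η : H)‖ * |s| := by
  have hconv : Convex ℝ (Set.uIcc (0:ℝ) s) := convex_uIcc 0 s
  have hderiv : ∀ r ∈ Set.uIcc (0:ℝ) s,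
      HasDerivWithinAt (fun r : ℝ => ⟪b (U (-r) (ξ : H)), U (-r) (η : H)⟫)
        ((fun r : ℝ => -Complex.I * ⟪c (U (-r) (ξ : H)), U (-r) (η : H)⟫) r)
        (Set.uIcc (0:ℝ) s) r :=
    fun r _ => (weak_hasDerivAt hU hw2 ξ η r).hasDerivWithinAt
  have hbound : ∀ r ∈ Set.uIcc (0:ℝ) s,
      ‖(fun r : ℝ => -Complex.I * ⟪c (U (-r) (ξ : H)), U (-r) (η : H)⟫) r‖ ≤
        ‖c‖ * ‖(ξ : H)‖ * ‖(η : H)‖ := by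
    intro r _
    simp only [norm_mul, norm_neg, Complex.norm_I, one_mul]
    calc ‖⟪c (U (-r) (ξ : H)), U (-r) (η : H)⟫‖
        ≤ ‖c (U (-r) (ξ : H))‖ * ‖U (-r) (η : H)‖ := norm_inner_le_norm _ _
      _ ≤ (‖c‖ * ‖U (-r) (ξ : H)‖) * ‖U (-r) (η : H)‖ := by
          gcongr; exact c.le_opNorm _
      _ = ‖c‖ * ‖(ξ : H)‖ * ‖(η : H)‖ := by rw [hU.isometry, hU.isometry]
  have h := hconv.norm_image_sub_le_of_norm_hasDerivWithin_le hderiv hbound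
      Set.left_mem_uIcc Set.right_mem_uIcc
  simpa [hU.map_zero, Real.norm_eq_abs] using h

lemma abs_le_of_mem_uIcc {r t : ℝ} (hr : r ∈ Set.uIcc (0:ℝ) t) : |r| ≤ |t| := by
  rcases Set.mem_uIcc.mp hr with ⟨h1, h2⟩ | ⟨h1, h2⟩
  · rw [abs_le]; constructor <;> [linarith [abs_nonneg t]; linarith [le_abs_self t]]
  · rw [abs_le]; constructor <;> [linarith [neg_abs_le t]; linarith [abs_nonneg t]]

lemma form_bound (hU : IsStoneGroupOf D U) {a b c : H →L[ℂ] H}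
    (hw1 : IsWeakDeriv D a b) (hw2 : IsWeakDeriv D b c)
    (ξ η : D.domain) (t : ℝ) :
    ‖⟪(conjAd U t a - a - (t : ℂ) • (Complex.I • b)) (ξ : H), (η : H)⟫‖ ≤
      (‖c‖ * ‖(ξ : H)‖ * ‖(η : H)‖) * t ^ 2 := by
  set K : ℂ := -Complex.I * ⟪b (ξ : H), (η : H)⟫ with hK
  set g : ℝ → ℂ := fun r => ⟪a (U (-r) (ξ : H)), U (-r) (η : H)⟫ - r * K with hgdef
  have hconv : Convex ℝ (Set.uIcc (0:ℝ) t) := convex_uIcc 0 t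
  have hg : ∀ r ∈ Set.uIcc (0:ℝ) t, HasDerivWithinAt g
      ((fun r : ℝ => -Complex.I * ⟪b (U (-r) (ξ : H)), U (-r) (η : H)⟫ - K) r)
      (Set.uIcc (0:ℝ) t) r := by
    intro r _
    have h1 := weak_hasDerivAt hU hw1 ξ η r
    have h2 : HasDerivAt (fun r : ℝ => (r : ℂ) * K) K r := by
      simpa using ((hasDerivAt_id r).ofReal_comp (z := r)).mul_const K
    exact (h1.sub h2).hasDerivWithinAt
  have hbound : ∀ r ∈ Set.uIcc (0:ℝ) t,
      ‖(fun r : ℝ => -Complex.I * ⟪b (U (-r) (ξ : H)), U (-r) (η : H)⟫ - K) r‖ ≤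
        (‖c‖ * ‖(ξ : H)‖ * ‖(η : H)‖) * |t| := by
    intro r hr
    have he : -Complex.I * ⟪b (U (-r) (ξ : H)), U (-r) (η : H)⟫ - K =
        -Complex.I * (⟪b (U (-r) (ξ : H)), U (-r) (η : H)⟫ - ⟪b (ξ : H), (η : H)⟫) := by
      rw [hK]; ring
    simp only [he, norm_mul, norm_neg, Complex.norm_I, one_mul]
    calc ‖⟪b (U (-r) (ξ : H)), U (-r) (η : H)⟫ - ⟪b (ξ : H), (η : H)⟫‖
        ≤ ‖c‖ * ‖(ξ : H)‖ * ‖(η : H)‖ * |r| := bdiff_bound hU hw2 ξ η r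
      _ ≤ ‖c‖ * ‖(ξ : H)‖ * ‖(η : H)‖ * |t| :=
          mul_le_mul_of_nonneg_left (abs_le_of_mem_uIcc hr) (by positivity)
  have hMVT := hconv.norm_image_sub_le_of_norm_hasDerivWithin_le hg hbound
      Set.left_mem_uIcc Set.right_mem_uIcc
  have hg0 : g 0 = ⟪a (ξ : H), (η : H)⟫ := by
    simp [hgdef, hU.map_zero]
  have hEq : ⟪(conjAd U t a - a - (t : ℂ) • (Complex.I • b)) (ξ : H), (η : H)⟫ = g t - g 0 := by
    simp only [conjAd, ContinuousLinearMap.sub_apply, ContinuousLinearMap.smul_apply,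
      ContinuousLinearMap.comp_apply, inner_sub_left, inner_smul_left, Complex.conj_I,
      Complex.conj_ofReal, hgdef, hK, RingHom.map_mul]
    rw [stone_inner hU]
    simp [hU.map_zero]
    ring
  rw [hEq]
  calc ‖g t - g 0‖ ≤ (‖c‖ * ‖(ξ : H)‖ * ‖(η : H)‖) * |t| * ‖t - 0‖ := hMVT
    _ = (‖c‖ * ‖(ξ : H)‖ * ‖(η : H)‖) * t ^ 2 := by
        rw [sub_zero, Real.norm_eq_abs, mul_assoc, abs_mul_abs_self, sq]

lemma opNorm_le_of_dense (E : H →L[ℂ] H) {C : ℝ} (hC : 0 ≤ C) (S : Submodule ℂ H)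
    (hS : Dense (S : Set H))
    (h : ∀ ξ η : S, ‖⟪E (ξ : H), (η : H)⟫‖ ≤ C * ‖(ξ : H)‖ * ‖(η : H)‖) : ‖E‖ ≤ C := by
  have h1 : ∀ (ξ : H) (η : S), ‖⟪E ξ, (η : H)⟫‖ ≤ C * ‖ξ‖ * ‖(η : H)‖ := by
    intro ξ η
    have hcl : IsClosed {ζ : H | ‖⟪E ζ, (η : H)⟫‖ ≤ C * ‖ζ‖ * ‖(η : H)‖} :=
      isClosed_le ((E.continuous.inner continuous_const).norm) (by fun_prop)
    exact closure_minimal (fun ζ hζ => h ⟨ζ, hζ⟩ η) hcl (hS ξ)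
  have h2 : ∀ ξ η : H, ‖⟪E ξ, η⟫‖ ≤ C * ‖ξ‖ * ‖η‖ := by
    intro ξ η
    have hcl : IsClosed {ζ : H | ‖⟪E ξ, ζ⟫‖ ≤ C * ‖ξ‖ * ‖ζ‖} :=
      isClosed_le ((continuous_const.inner continuous_id).norm) (by fun_prop)
    exact closure_minimal (fun ζ hζ => h1 ξ ⟨ζ, hζ⟩) hcl (hS η)
  refine E.opNorm_le_bound hC fun ξ => ?_
  rcases eq_or_ne (E ξ) 0 with h0 | h0
  · rw [h0, norm_zero]; positivity
  · have h3 := h2 ξ (E ξ)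
    rw [inner_self_eq_norm_sq_to_K] at h3
    simp only [norm_pow, RCLike.norm_ofReal, abs_norm] at h3
    have hpos : 0 < ‖E ξ‖ := norm_pos_iff.mpr h0
    nlinarith

/-- If `a` is twice weakly `D`-differentiable then `a` is strongly
`D`-differentiable: `(α_t(a) − a)/(it) → wD(a)` in operator norm, i.e.
`t ↦ α_t(a)` has norm derivative `i wD(a)` at `0`. -/
theorem strongly_differentiable_of_twice_weakly
    (D : H →ₗ.[ℂ] H) (hD : IsSelfAdjoint D)
    (U : ℝ → H →L[ℂ] H) (hU : IsStoneGroupOf D U)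
    (a b c : H →L[ℂ] H)
    (hw1 : IsWeakDeriv D a b) (hw2 : IsWeakDeriv D b c) :
    HasDerivAt (fun t : ℝ => conjAd U t a) (Complex.I • b) 0 := by
  have hdense := hD.dense_domain
  have hbound : ∀ t : ℝ, ‖conjAd U t a - a - (t : ℂ) • (Complex.I • b)‖ ≤ ‖c‖ * t ^ 2 := by
    intro t
    refine opNorm_le_of_dense _ (by positivity) D.domain hdense fun ξ η => ?_
    calc ‖⟪(conjAd U t a - a - (t : ℂ) • (Complex.I • b)) (ξ : H), (η : H)⟫‖
        ≤ (‖c‖ * ‖(ξ : H)‖ * ‖(η : H)‖) * t ^ 2 := form_bound hU hw1 hw2 ξ η t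
      _ = ‖c‖ * t ^ 2 * ‖(ξ : H)‖ * ‖(η : H)‖ := by ring
  have hz : conjAd U 0 a = a := by
    simp [conjAd, hU.map_zero, neg_zero, ContinuousLinearMap.one_def,
      ContinuousLinearMap.comp_id, ContinuousLinearMap.id_comp]
  rw [hasDerivAt_iff_isLittleO, Asymptotics.isLittleO_iff]
  intro ε hε
  rw [Metric.eventually_nhds_iff]
  refine ⟨ε / (‖c‖ + 1), by positivity, fun t ht => ?_⟩
  have hts : (t - 0) • (Complex.I • b) = (t : ℂ) • (Complex.I • b) := by
    rw [sub_zero, Complex.coe_smul]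
  rw [hz, hts]
  have h1 := hbound t
  have ht' : |t| < ε / (‖c‖ + 1) := by
    simpa [Real.dist_eq] using ht
  have hc1 : (0:ℝ) < ‖c‖ + 1 := by positivity
  calc ‖conjAd U t a - a - (t : ℂ) • (Complex.I • b)‖ ≤ ‖c‖ * t ^ 2 := h1
    _ ≤ ε * ‖t - 0‖ := by
        rw [sub_zero, Real.norm_eq_abs]
        have h2 : ‖c‖ * |t| ≤ ε := by
          rcases le_or_gt (‖c‖ * |t|) ε with h | h
          · exact h
          · nlinarith [abs_nonneg t, norm_nonneg c, (lt_div_iff₀ hc1).mp ht']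
        nlinarith [abs_nonneg t, _root_.sq_abs t]
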